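/- arXiv:1012.3405 — 4 statements merged into one kernel-verified Lean document; each statement's English description precedes it below -/
import Mathlib

section
/- With V, M, f as above, let x ∈ V and Y ⊆ V be such that every y ∈ Y satisfies y ◁ x, and such that for every m ∈ M there exists y ∈ Y with f(x,y) > m. Then x is the least upper bound of Y in (V, ◁): x is an upper bound, and any z with y ◁ z for all y ∈ Y satisfies x ◁ z or x = z. -/
theorem stmt_7 {V M : Type*} [LinearOrder V] [LinearOrder M]
    (f : V → V → M)
    (hsymm : ∀ x y : V, f x y = f y x)
    (hmin : ∀ x y z : V, x < y → y < z → f x z = min (f x y) (f y z))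
    (x : V) (Y : Set V)
    (hY : ∀ y ∈ Y, y < x)
    (hcof : ∀ m : M, ∃ y ∈ Y, m < f x y) :
    (∀ y ∈ Y, y ≤ x) ∧ ∀ z : V, (∀ y ∈ Y, y < z) → x ≤ z := by
  refine ⟨fun y hy => (hY y hy).le, fun z hz => ?_⟩
  by_contra h
  push_neg at h
  obtain ⟨y, hy, hfy⟩ := hcof (f x z)
  have h1 : f y x = min (f y z) (f z x) := hmin y z x (hz y hy) h
  have : f x y ≤ f x z := by
    rw [hsymm x y, h1, hsymm z x]
    exact min_le_right _ _
  exact absurd this (not_le.mpr hfy)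
end

section
/- With V, M, f as above, assume additionally the density property: for every a ∈ V and every m ∈ M there exists b ∈ V with b ◁ a and f(a,b) = m. Fix a ∈ V and suppose S ⊆ M is cofinal in M (i.e., for every m ∈ M there is s ∈ S with m ≤ s). For each s ∈ S choose b_s ◁ a with f(a,b_s) = s. Then the set {b_s : s ∈ S} is cofinal in {c ∈ V : c ◁ a}: for every c ◁ a there exists s ∈ S with c ◁ b_s or c = b_s. -/
theorem stmt_8 {V M : Type*} [LinearOrder V] [LinearOrder M]
    (f : V → V → M)
    (hsymm : ∀ x y : V, f x y = f y x)
    (hmin : ∀ x y z : V, x < y → y < z → f x z = min (f x y) (f y z))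
    (hnomax : ∀ m : M, ∃ m' : M, m < m')
    (hdense : ∀ a : V, ∀ m : M, ∃ b : V, b < a ∧ f a b = m)
    (a : V) (S : Set M)
    (hScof : ∀ m : M, ∃ s ∈ S, m ≤ s)
    (b : M → V)
    (hb : ∀ s ∈ S, b s < a ∧ f a (b s) = s) :
    ∀ c : V, c < a → ∃ s ∈ S, c ≤ b s := by
  intro c hc
  obtain ⟨m', hm'⟩ := hnomax (f a c)
  obtain ⟨s, hsS, hs⟩ := hScof m'
  refine ⟨s, hsS, ?_⟩
  obtain ⟨hba, hfs⟩ := hb s hsS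
  by_contra h
  push_neg at h
  have := hmin (b s) c a h hc
  rw [← hsymm a (b s), hfs, hsymm c a] at this
  have : s ≤ f a c := this ▸ min_le_right _ _
  exact absurd (lt_of_lt_of_le hm' hs) (not_lt.2 this)
end

section
/- Let μ be an ordinal and λ an ordinal with λ ≥ 2, and order the functions μ → λ lexicographically. If x <_lex z, then there exists a function y : μ → λ which is eventually zero (y(β) = 0 for all β greater than some α < μ) such that x <_lex y and y ≤_lex z. -/
theorem stmt_12 (μ lam : Ordinal) (hlam : 2 ≤ lam)
    (x z : Set.Iio μ → Set.Iio lam)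
    (hxz : Pi.Lex (· < ·) (fun {_} => (· < ·)) x z) :
    ∃ y : Set.Iio μ → Set.Iio lam,
      (∃ α : Set.Iio μ, ∀ β : Set.Iio μ, α < β → (y β : Ordinal) = 0) ∧
      Pi.Lex (· < ·) (fun {_} => (· < ·)) x y ∧
      (Pi.Lex (· < ·) (fun {_} => (· < ·)) y z ∨ y = z) := by
  obtain ⟨α, hagree, hlt⟩ := hxz
  have h0 : (0 : Ordinal) < lam := lt_of_lt_of_le (by norm_num) hlam
  set y : Set.Iio μ → Set.Iio lam := fun β => if β ≤ α then z β else ⟨0, h0⟩ with hy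
  refine ⟨y, ⟨α, fun β hβ => by simp [hy, not_le.2 hβ]⟩, ?_, ?_⟩
  · refine ⟨α, fun j hj => ?_, ?_⟩
    · simp [hy, le_of_lt hj, hagree j hj]
    · simpa [hy] using hlt
  · by_cases hz : ∀ β, α < β → (z β : Ordinal) = 0
    · right
      funext β
      rcases le_or_gt β α with h | h
      · simp [hy, h]
      · have hzb := hz β h
        simp only [hy, not_le.2 h, if_neg, if_false]
        exact Subtype.ext hzb.symm
    · left
      push_neg at hz
      have hne : {β : Set.Iio μ | y β ≠ z β}.Nonempty := by
        obtain ⟨β, hβ, hβ0⟩ := hz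
        refine ⟨β, fun h => hβ0 ?_⟩
        have : y β = (⟨0, h0⟩ : Set.Iio lam) := by simp [hy, not_le.2 hβ]
        rw [this] at h
        exact congrArg Subtype.val h.symm
      have hwf : WellFounded ((· < ·) : Set.Iio μ → Set.Iio μ → Prop) :=
        wellFounded_lt
      set γ := hwf.min _ hne with hγ
      have hγmem : y γ ≠ z γ := hwf.min_mem _ hne
      have hγle : ¬ γ ≤ α := fun h => hγmem (by simp [hy, h])
      refine ⟨γ, fun j hj => ?_, ?_⟩
      · by_contra hne'
        exact hwf.not_lt_min _ hne' hj
      · have hyγ : y γ = (⟨0, h0⟩ : Set.Iio lam) := by simp [hy, hγle]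
        rw [hyγ]
        have : (⟨0, h0⟩ : Set.Iio lam) ≠ z γ := by rw [← hyγ]; exact hγmem
        exact lt_of_le_of_ne (Subtype.coe_le_coe.mp zero_le) this
end

section
/- Let L be a linear order and D ⊆ L a subset such that for all a < b in L there exists d ∈ D with a < d < b (D is dense in L). Then the cardinality of L is at most 2^{|D|}. -/
theorem stmt_13 {L : Type*} [LinearOrder L] (D : Set L)
    (hD : ∀ a b : L, a < b → ∃ d ∈ D, a < d ∧ d < b) :
    Cardinal.mk L ≤ 2 ^ Cardinal.mk D := by
  have hinj : Function.Injective (fun x : L => {d : D | (d : L) < x}) := by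
    intro x y h
    by_contra hne
    wlog hxy : x < y generalizing x y
    · exact this h.symm (Ne.symm hne) ((Ne.lt_or_gt hne).resolve_left hxy)
    obtain ⟨d, hd, h1, h2⟩ := hD x y hxy
    have hmem : (⟨d, hd⟩ : D) ∈ {d : D | (d : L) < y} := h2
    rw [← show {d : D | (d : L) < x} = {d : D | (d : L) < y} from h] at hmem
    exact absurd hmem (not_lt.2 h1.le)
  calc Cardinal.mk L ≤ Cardinal.mk (Set D) := Cardinal.mk_le_of_injective hinj
    _ = 2 ^ Cardinal.mk D := Cardinal.mk_set
end
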